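/- Progress for the asymmetric algorithm: in every fair execution of the asymmetric algorithm, every process that is waiting in state 2 (having set flag[i]:=WAITING) eventually enters the critical section. -/

import Mathlib

/-!
Model of the asymmetric mutual-exclusion algorithm with a coordinator.

Shared variables:
* `turn : Option (Fin N)` where `none` stands for THINKING,
* `flag : Fin N → Flag` with values REMAINDER / WAITING.

Process `i` automaton: state 1 --(flag[i]:=WAITING)--> state 2
--(turn = i ⇒)--> critical section --(flag[i]:=REMAINDER)--> state 3
--(turn := THINKING)--> state 4.

Coordinator automaton (local counter `p`, initially set to 0):
state 1 --(p:=0)--> state 2; state 2 --(flag[p]≠WAITING ⇒)--> state 3;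
state 2 --(flag[p]=WAITING ⇒)--> state 2.1 --(turn:=p)--> state 2.2
--(turn=THINKING ⇒)--> state 3; state 3 --(p:=(p+1) mod N)--> state 2.
-/

namespace Asym

inductive Flag
  | remainder | waiting
  deriving DecidableEq

/-- Program counter of a process. -/
inductive PPC
  | s1 | s2 | cs | s3 | s4
  deriving DecidableEq

/-- Program counter of the coordinator. -/
inductive CPC
  | c1 | c2 | c21 | c22 | c3
  deriving DecidableEq

/-- A global state. -/
structure St (N : ℕ) where
  /-- `none` encodes THINKING. -/
  turn : Option (Fin N)
  flag : Fin N → Flag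
  pc : Fin N → PPC
  cpc : CPC
  p : Fin N

/-- The initial global state. -/
def initSt (N : ℕ) [NeZero N] : St N where
  turn := none
  flag := fun _ => .remainder
  pc := fun _ => .s1
  cpc := .c1
  p := 0

/-- Who takes a step: a process or the coordinator. -/
inductive Label (N : ℕ)
  | proc : Fin N → Label N
  | coord

/-- One enabled transition of a single agent. -/
inductive Step {N : ℕ} [NeZero N] : Label N → St N → St N → Prop
  | p12 (s : St N) (i : Fin N) (h : s.pc i = .s1) :
      Step (.proc i) s { s with flag := Function.update s.flag i .waiting,
                                pc := Function.update s.pc i .s2 }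
  | p2cs (s : St N) (i : Fin N) (h : s.pc i = .s2) (ht : s.turn = some i) :
      Step (.proc i) s { s with pc := Function.update s.pc i .cs }
  | pcs3 (s : St N) (i : Fin N) (h : s.pc i = .cs) :
      Step (.proc i) s { s with flag := Function.update s.flag i .remainder,
                                pc := Function.update s.pc i .s3 }
  | p34 (s : St N) (i : Fin N) (h : s.pc i = .s3) :
      Step (.proc i) s { s with turn := none,
                                pc := Function.update s.pc i .s4 }
  | c12 (s : St N) (h : s.cpc = .c1) :
      Step .coord s { s with p := 0, cpc := .c2 }
  | c23 (s : St N) (h : s.cpc = .c2) (hf : s.flag s.p ≠ .waiting) :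
      Step .coord s { s with cpc := .c3 }
  | c2_21 (s : St N) (h : s.cpc = .c2) (hf : s.flag s.p = .waiting) :
      Step .coord s { s with cpc := .c21 }
  | c21_22 (s : St N) (h : s.cpc = .c21) :
      Step .coord s { s with turn := some s.p, cpc := .c22 }
  | c22_3 (s : St N) (h : s.cpc = .c22) (ht : s.turn = none) :
      Step .coord s { s with cpc := .c3 }
  | c3_2 (s : St N) (h : s.cpc = .c3) :
      Step .coord s { s with p := s.p + 1, cpc := .c2 }

/-- An execution: a sequence of global states starting from the initial
state, together with a schedule; at each instant either exactly one agent
takes one of its enabled transitions, or (if `none` is scheduled) the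
state stutters. -/
structure Exec (N : ℕ) [NeZero N] where
  states : ℕ → St N
  sched : ℕ → Option (Label N)
  init : states 0 = initSt N
  step : ∀ n, match sched n with
    | some l => Step l (states n) (states (n + 1))
    | none => states (n + 1) = states n

/-- An agent is enabled if it can take a transition. -/
def Enabled {N : ℕ} [NeZero N] (l : Label N) (s : St N) : Prop :=
  ∃ s', Step l s s'

/-- Weak fairness: an agent whose next transition is continuously enabled
eventually takes it. -/
def Exec.Fair {N : ℕ} [NeZero N] (e : Exec N) : Prop :=
  ∀ l n, (∀ m, n ≤ m → Enabled l (e.states m)) → ∃ m, n ≤ m ∧ e.sched m = some l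

/-- A state is reachable if it occurs in some execution. -/
def Reachable {N : ℕ} [NeZero N] (s : St N) : Prop :=
  ∃ e : Exec N, ∃ n, e.states n = s

variable {N : ℕ} [NeZero N]

def Inv (s : St N) : Prop :=
  (∀ j, s.flag j = Flag.waiting ↔ (s.pc j = PPC.s2 ∨ s.pc j = PPC.cs)) ∧
  (∀ j, (s.pc j = PPC.cs ∨ s.pc j = PPC.s3) → s.turn = some j) ∧
  (∀ j, s.turn = some j → s.cpc = CPC.c22 ∧ s.p = j) ∧
  (∀ j, s.turn = some j → (s.pc j = PPC.s2 ∨ s.pc j = PPC.cs ∨ s.pc j = PPC.s3)) ∧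
  (s.cpc = CPC.c21 → s.flag s.p = Flag.waiting)

lemma inv_init : Inv (initSt N) := by
  refine ⟨?_, ?_, ?_, ?_, ?_⟩ <;> simp [initSt]

set_option maxHeartbeats 1000000 in
lemma inv_step {l : Label N} {s s' : St N} (h : Step l s s') (hs : Inv s) : Inv s' := by
  obtain ⟨h1, h2, h3, h4, h5⟩ := hs
  cases h with
  | p12 s i hp =>
      refine ⟨fun j => ?_, fun j hj => ?_, fun j hj => ?_, fun j hj => ?_, fun hc => ?_⟩ <;>
        simp only [Function.update_apply] at * <;> aesop
  | p2cs s i hp ht =>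
      refine ⟨fun j => ?_, fun j hj => ?_, fun j hj => ?_, fun j hj => ?_, fun hc => ?_⟩ <;>
        simp only [Function.update_apply] at * <;>
        first
          | (by_cases hji : j = i <;> aesop (add safe forward [h1, h2, h3, h4]))
          | aesop (add safe forward [h1, h2, h3, h4])
         
  | pcs3 s i hp =>
      refine ⟨fun j => ?_, fun j hj => ?_, fun j hj => ?_, fun j hj => ?_, fun hc => ?_⟩ <;>
        simp only [Function.update_apply] at * <;>
        first
          | (by_cases hji : j = i <;> aesop (add safe forward [h1, h2, h3, h4]))
          | aesop (add safe forward [h1, h2, h3, h4])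
         
  | p34 s i hp =>
      have h2i := h2 i (Or.inr hp)
      refine ⟨fun j => ?_, fun j hj => ?_, fun j hj => ?_, fun j hj => ?_, fun hc => ?_⟩ <;>
        simp only [Function.update_apply] at * <;>
        first
          | (by_cases hji : j = i <;> aesop (add safe forward [h1, h2, h3, h4]))
          | aesop (add safe forward [h1, h2, h3, h4])
         
  | c12 s hcp =>
      refine ⟨fun j => ?_, fun j hj => ?_, fun j hj => ?_, fun j hj => ?_, fun hc => ?_⟩ <;>
        simp only [Function.update_apply] at * <;> aesop
  | c23 s hcp hf =>
      refine ⟨fun j => ?_, fun j hj => ?_, fun j hj => ?_, fun j hj => ?_, fun hc => ?_⟩ <;>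
        simp only [Function.update_apply] at * <;> aesop
  | c2_21 s hcp hf =>
      refine ⟨fun j => ?_, fun j hj => ?_, fun j hj => ?_, fun j hj => ?_, fun hc => ?_⟩ <;>
        simp only [Function.update_apply] at * <;> aesop
  | c21_22 s hcp =>
      refine ⟨fun j => ?_, fun j hj => ?_, fun j hj => ?_, fun j hj => ?_, fun hc => ?_⟩ <;>
        simp only [Function.update_apply] at * <;> aesop
  | c22_3 s hcp ht =>
      refine ⟨fun j => ?_, fun j hj => ?_, fun j hj => ?_, fun j hj => ?_, fun hc => ?_⟩ <;>
        simp only [Function.update_apply] at * <;> aesop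
  | c3_2 s hcp =>
      refine ⟨fun j => ?_, fun j hj => ?_, fun j hj => ?_, fun j hj => ?_, fun hc => ?_⟩ <;>
        simp only [Function.update_apply] at * <;> aesop

lemma inv_all (e : Exec N) : ∀ m, Inv (e.states m) := by
  intro m
  induction m with
  | zero => rw [e.init]; exact inv_init
  | succ m ih =>
      have h := e.step m
      cases hs : e.sched m with
      | none => rw [hs] at h; rw [h]; exact ih
      | some l => rw [hs] at h; exact inv_step h ih

/-- Case analysis for a process step. -/
lemma proc_cases {s s' : St N} {j : Fin N} (h : Step (Label.proc j) s s') :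
    (s.pc j = PPC.s1 ∧ s' = { s with flag := Function.update s.flag j Flag.waiting,
                                     pc := Function.update s.pc j PPC.s2 }) ∨
    (s.pc j = PPC.s2 ∧ s.turn = some j ∧
        s' = { s with pc := Function.update s.pc j PPC.cs }) ∨
    (s.pc j = PPC.cs ∧ s' = { s with flag := Function.update s.flag j Flag.remainder,
                                     pc := Function.update s.pc j PPC.s3 }) ∨
    (s.pc j = PPC.s3 ∧ s' = { s with turn := none,
                                     pc := Function.update s.pc j PPC.s4 }) := by
  cases h with
  | p12 _ _ hp => exact Or.inl ⟨hp, rfl⟩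
  | p2cs _ _ hp ht => exact Or.inr (Or.inl ⟨hp, ht, rfl⟩)
  | pcs3 _ _ hp => exact Or.inr (Or.inr (Or.inl ⟨hp, rfl⟩))
  | p34 _ _ hp => exact Or.inr (Or.inr (Or.inr ⟨hp, rfl⟩))

/-- Case analysis for a coordinator step. -/
lemma coord_cases {s s' : St N} (h : Step Label.coord s s') :
    (s.cpc = CPC.c1 ∧ s' = { s with p := 0, cpc := CPC.c2 }) ∨
    (s.cpc = CPC.c2 ∧ s.flag s.p ≠ Flag.waiting ∧ s' = { s with cpc := CPC.c3 }) ∨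
    (s.cpc = CPC.c2 ∧ s.flag s.p = Flag.waiting ∧ s' = { s with cpc := CPC.c21 }) ∨
    (s.cpc = CPC.c21 ∧ s' = { s with turn := some s.p, cpc := CPC.c22 }) ∨
    (s.cpc = CPC.c22 ∧ s.turn = none ∧ s' = { s with cpc := CPC.c3 }) ∨
    (s.cpc = CPC.c3 ∧ s' = { s with p := s.p + 1, cpc := CPC.c2 }) := by
  cases h with
  | c12 _ hc => exact Or.inl ⟨hc, rfl⟩
  | c23 _ hc hf => exact Or.inr (Or.inl ⟨hc, hf, rfl⟩)
  | c2_21 _ hc hf => exact Or.inr (Or.inr (Or.inl ⟨hc, hf, rfl⟩))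
  | c21_22 _ hc => exact Or.inr (Or.inr (Or.inr (Or.inl ⟨hc, rfl⟩)))
  | c22_3 _ hc ht => exact Or.inr (Or.inr (Or.inr (Or.inr (Or.inl ⟨hc, ht, rfl⟩))))
  | c3_2 _ hc => exact Or.inr (Or.inr (Or.inr (Or.inr (Or.inr ⟨hc, rfl⟩))))

lemma step_frame {l : Label N} {s s' : St N} (h : Step l s s') (j : Fin N)
    (hl : l ≠ Label.proc j) : s'.pc j = s.pc j ∧ s'.flag j = s.flag j := by
  cases h <;>
    first
      | exact ⟨rfl, rfl⟩
      | (rename_i i _ _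
         have hij : j ≠ i := fun hji => hl (by rw [hji])
         constructor <;> simp [Function.update_apply, hij])
      | (rename_i i _
         have hij : j ≠ i := fun hji => hl (by rw [hji])
         constructor <;> simp [Function.update_apply, hij])

lemma coord_frame {s s' : St N} {j : Fin N} (h : Step (Label.proc j) s s') :
    s'.cpc = s.cpc ∧ s'.p = s.p := by
  cases h <;> exact ⟨rfl, rfl⟩

lemma turn_change {l : Label N} {s s' : St N} (h : Step l s s') (hne : s'.turn ≠ s.turn) :
    (∃ j, l = Label.proc j ∧ s.pc j = PPC.s3 ∧ s'.turn = none) ∨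
    (l = Label.coord ∧ s.cpc = CPC.c21 ∧ s'.turn = some s.p) := by
  cases h with
  | p34 _ i hp => exact Or.inl ⟨i, rfl, hp, rfl⟩
  | c21_22 _ hc => exact Or.inr ⟨rfl, hc, rfl⟩
  | _ => exact absurd rfl hne

/-- Evaluate `pc` after a `p2cs` style update. -/
lemma step_from_s2 {s s' : St N} {i : Fin N} (h : Step (Label.proc i) s s')
    (h2 : s.pc i = PPC.s2) : s'.pc i = PPC.cs := by
  rcases proc_cases h with ⟨hp, _⟩ | ⟨_, _, hq⟩ | ⟨hp, _⟩ | ⟨hp, _⟩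
  · rw [h2] at hp; cases hp
  · rw [hq]; simp
  · rw [h2] at hp; cases hp
  · rw [h2] at hp; cases hp

/-- Rank of a process program counter while it owns the turn. -/
def rank : PPC → ℕ
  | PPC.s2 => 3
  | PPC.cs => 2
  | PPC.s3 => 1
  | _ => 0

lemma no_forever (e : Exec N) (hfair : e.Fair) (m : ℕ) (j : Fin N)
    (Hf : ∀ k, m ≤ k → (e.states k).turn = some j) : False := by
  have hmem : ∀ k, m ≤ k → ((e.states k).pc j = PPC.s2 ∨ (e.states k).pc j = PPC.cs ∨
      (e.states k).pc j = PPC.s3) := fun k hk => (inv_all e k).2.2.2.1 j (Hf k hk)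
  have hen : ∀ k, m ≤ k → Enabled (Label.proc j) (e.states k) := by
    intro k hk
    rcases hmem k hk with h | h | h
    · exact ⟨_, Step.p2cs _ j h (Hf k hk)⟩
    · exact ⟨_, Step.pcs3 _ j h⟩
    · exact ⟨_, Step.p34 _ j h⟩
  have mono : ∀ k, m ≤ k → rank ((e.states (k+1)).pc j) ≤ rank ((e.states k).pc j) := by
    intro k hk
    have hst := e.step k
    cases hs : e.sched k with
    | none => rw [hs] at hst; rw [hst]
    | some l =>
        rw [hs] at hst
        by_cases hl : l = Label.proc j
        · subst hl
          rcases proc_cases hst with ⟨hp, _⟩ | ⟨hp, _, hq⟩ | ⟨hp, hq⟩ | ⟨hp, hq⟩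
          · rcases hmem k hk with h | h | h <;> rw [h] at hp <;> cases hp
          · rw [hq, hp]; simp [rank, Function.update_apply]
          · rw [hq, hp]; simp [rank, Function.update_apply]
          · exfalso
            have := Hf (k+1) (Nat.le_succ_of_le hk)
            rw [hq] at this; simp at this
        · rw [(step_frame hst j hl).1]
  have mono' : ∀ a b, m ≤ a → a ≤ b →
      rank ((e.states b).pc j) ≤ rank ((e.states a).pc j) := by
    intro a b ha hab
    induction b, hab using Nat.le_induction with
    | base => exact le_rfl
    | succ b hab ih => exact le_trans (mono b (le_trans ha hab)) ih
  have main : ∀ r k, m ≤ k → rank ((e.states k).pc j) ≤ r → False := by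
    intro r
    induction r with
    | zero =>
        intro k hk hr
        rcases hmem k hk with h | h | h <;> rw [h] at hr <;> simp [rank] at hr
    | succ r ih =>
        intro k hk hr
        obtain ⟨k', hk', hsk⟩ := hfair (Label.proc j) k
          (fun t ht => hen t (le_trans hk ht))
        have hst := e.step k'; rw [hsk] at hst
        have hr' : rank ((e.states k').pc j) ≤ r + 1 :=
          le_trans (mono' k k' hk hk') hr
        have hmk' : m ≤ k' := le_trans hk hk'
        rcases proc_cases hst with ⟨hp, _⟩ | ⟨hp, _, hq⟩ | ⟨hp, hq⟩ | ⟨hp, hq⟩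
        · rcases hmem k' hmk' with h | h | h <;> rw [h] at hp <;> cases hp
        · refine ih (k'+1) (Nat.le_succ_of_le hmk') ?_
          rw [hp] at hr'
          rw [hq]
          simp only [rank] at hr'
          simp [rank, Function.update_apply]
          omega
        · refine ih (k'+1) (Nat.le_succ_of_le hmk') ?_
          rw [hp] at hr'
          rw [hq]
          simp only [rank] at hr'
          simp [rank, Function.update_apply]
          omega
        · have := Hf (k'+1) (Nat.le_succ_of_le hmk')
          rw [hq] at this; simp at this
  exact main (rank ((e.states m).pc j)) m le_rfl le_rfl

lemma eventually_none (e : Exec N) (hfair : e.Fair) (m : ℕ) :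
    ∃ k, m ≤ k ∧ (e.states k).turn = none := by
  by_contra hc
  push_neg at hc
  cases hm : (e.states m).turn with
  | none => exact hc m le_rfl hm
  | some j =>
      refine no_forever e hfair m j ?_
      intro k hk
      induction k, hk using Nat.le_induction with
      | base => exact hm
      | succ k hk ih =>
          have hst := e.step k
          cases hs : e.sched k with
          | none => rw [hs] at hst; rw [hst]; exact ih
          | some l =>
              rw [hs] at hst
              by_cases hch : (e.states (k+1)).turn = (e.states k).turn
              · rw [hch]; exact ih
              · rcases turn_change hst hch with ⟨j', _, _, hn⟩ | ⟨_, hc21, _⟩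
                · exact absurd hn (hc (k+1) (Nat.le_succ_of_le hk))
                · have := ((inv_all e k).2.2.1 j ih).1
                  rw [this] at hc21; cases hc21

lemma coord_eventually (e : Exec N) (hfair : e.Fair) (m : ℕ) :
    ∃ k, m ≤ k ∧ e.sched k = some Label.coord := by
  by_contra hc
  push_neg at hc
  obtain ⟨k0, hk0, ht0⟩ := eventually_none e hfair m
  have hpersn : ∀ k, k0 ≤ k → (e.states k).turn = none := by
    intro k hk
    induction k, hk using Nat.le_induction with
    | base => exact ht0
    | succ k hk ih =>
        have hst := e.step k
        cases hs : e.sched k with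
        | none => rw [hs] at hst; rw [hst]; exact ih
        | some l =>
            rw [hs] at hst
            by_cases hch : (e.states (k+1)).turn = (e.states k).turn
            · rw [hch]; exact ih
            · rcases turn_change hst hch with ⟨j', _, _, hn⟩ | ⟨hl, _, _⟩
              · exact hn
              · exact absurd (hl ▸ hs) (hc k (le_trans hk0 hk))
  have hen : ∀ k, k0 ≤ k → Enabled Label.coord (e.states k) := by
    intro k hk
    have ht := hpersn k hk
    cases hcp : (e.states k).cpc with
    | c1 => exact ⟨_, Step.c12 _ hcp⟩
    | c2 =>
        by_cases hf : (e.states k).flag ((e.states k).p) = Flag.waiting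
        · exact ⟨_, Step.c2_21 _ hcp hf⟩
        · exact ⟨_, Step.c23 _ hcp hf⟩
    | c21 => exact ⟨_, Step.c21_22 _ hcp⟩
    | c22 => exact ⟨_, Step.c22_3 _ hcp ht⟩
    | c3 => exact ⟨_, Step.c3_2 _ hcp⟩
  obtain ⟨k, hk, hsk⟩ := hfair Label.coord k0 hen
  exact hc k (le_trans hk0 hk) hsk

lemma coord_advance (e : Exec N) (hfair : e.Fair) (m : ℕ) :
    ∃ k, m ≤ k ∧ e.sched k = some Label.coord ∧
      (e.states k).cpc = (e.states m).cpc ∧ (e.states k).p = (e.states m).p := by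
  classical
  have hex : ∃ d, e.sched (m + d) = some Label.coord := by
    obtain ⟨k, hk, hsk⟩ := coord_eventually e hfair m
    exact ⟨k - m, by rwa [Nat.add_sub_cancel' hk]⟩
  have hconst : ∀ t, t ≤ Nat.find hex →
      (e.states (m + t)).cpc = (e.states m).cpc ∧ (e.states (m + t)).p = (e.states m).p := by
    intro t ht
    induction t with
    | zero => exact ⟨rfl, rfl⟩
    | succ t ih =>
        have ht' : t < Nat.find hex := ht
        have ihc := ih (le_of_lt ht')
        have hns : e.sched (m + t) ≠ some Label.coord := Nat.find_min hex ht'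
        have hst := e.step (m + t)
        cases hs : e.sched (m + t) with
        | none =>
            rw [hs] at hst
            rw [show m + (t+1) = (m + t) + 1 by omega, hst]
            exact ihc
        | some l =>
            rw [hs] at hst
            cases l with
            | coord => exact absurd hs hns
            | proc j =>
                have hcf := coord_frame hst
                rw [show m + (t+1) = (m + t) + 1 by omega, hcf.1, hcf.2]
                exact ihc
  have := hconst (Nat.find hex) le_rfl
  exact ⟨m + Nat.find hex, Nat.le_add_right _ _, Nat.find_spec hex, this.1, this.2⟩

lemma stage_c21 (e : Exec N) (hfair : e.Fair) (m : ℕ) (h : (e.states m).cpc = CPC.c21) :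
    ∃ k, m ≤ k ∧ (e.states k).cpc = CPC.c22 ∧ (e.states k).p = (e.states m).p ∧
      (e.states k).turn = some ((e.states m).p) := by
  obtain ⟨k, hk, hsk, hcpc, hp⟩ := coord_advance e hfair m
  have hst := e.step k; rw [hsk] at hst
  rcases coord_cases hst with ⟨hc, hq⟩ | ⟨hc, _, hq⟩ | ⟨hc, _, hq⟩ | ⟨hc, hq⟩ |
      ⟨hc, _, hq⟩ | ⟨hc, hq⟩ <;> rw [hcpc, h] at hc <;> try simp at hc
  exact ⟨k + 1, Nat.le_succ_of_le hk, by rw [hq], by rw [hq]; exact hp,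
    by rw [hq]; simp [hp]⟩

lemma stage_c22 (e : Exec N) (hfair : e.Fair) (m : ℕ) (h : (e.states m).cpc = CPC.c22) :
    ∃ k, m ≤ k ∧ (e.states k).cpc = CPC.c3 ∧ (e.states k).p = (e.states m).p := by
  obtain ⟨k, hk, hsk, hcpc, hp⟩ := coord_advance e hfair m
  have hst := e.step k; rw [hsk] at hst
  rcases coord_cases hst with ⟨hc, hq⟩ | ⟨hc, _, hq⟩ | ⟨hc, _, hq⟩ | ⟨hc, hq⟩ |
      ⟨hc, _, hq⟩ | ⟨hc, hq⟩ <;> rw [hcpc, h] at hc <;> try simp at hc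
  exact ⟨k + 1, Nat.le_succ_of_le hk, by rw [hq], by rw [hq]; exact hp⟩

lemma stage_c3 (e : Exec N) (hfair : e.Fair) (m : ℕ) (h : (e.states m).cpc = CPC.c3) :
    ∃ k, m ≤ k ∧ (e.states k).cpc = CPC.c2 ∧ (e.states k).p = (e.states m).p + 1 := by
  obtain ⟨k, hk, hsk, hcpc, hp⟩ := coord_advance e hfair m
  have hst := e.step k; rw [hsk] at hst
  rcases coord_cases hst with ⟨hc, hq⟩ | ⟨hc, _, hq⟩ | ⟨hc, _, hq⟩ | ⟨hc, hq⟩ |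
      ⟨hc, _, hq⟩ | ⟨hc, hq⟩ <;> rw [hcpc, h] at hc <;> try simp at hc
  exact ⟨k + 1, Nat.le_succ_of_le hk, by rw [hq], by rw [hq]; simp [hp]⟩

lemma stage_c2 (e : Exec N) (hfair : e.Fair) (m : ℕ) (h : (e.states m).cpc = CPC.c2) :
    ∃ k, m ≤ k ∧ (e.states k).cpc = CPC.c3 ∧ (e.states k).p = (e.states m).p := by
  obtain ⟨k, hk, hsk, hcpc, hp⟩ := coord_advance e hfair m
  have hst := e.step k; rw [hsk] at hst
  rcases coord_cases hst with ⟨hc, hq⟩ | ⟨hc, _, hq⟩ | ⟨hc, _, hq⟩ | ⟨hc, hq⟩ |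
      ⟨hc, _, hq⟩ | ⟨hc, hq⟩ <;> rw [hcpc, h] at hc <;> try simp at hc
  · -- c23 : straight to c3
    exact ⟨k + 1, Nat.le_succ_of_le hk, by rw [hq], by rw [hq]; exact hp⟩
  · -- c2_21 : to c21, then c22, then c3
    have h21 : (e.states (k+1)).cpc = CPC.c21 := by rw [hq]
    have hp21 : (e.states (k+1)).p = (e.states m).p := by rw [hq]; exact hp
    obtain ⟨k2, hk2, h22, hp22, _⟩ := stage_c21 e hfair (k+1) h21
    obtain ⟨k3, hk3, h3, hp3⟩ := stage_c22 e hfair k2 h22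
    exact ⟨k3, by omega, h3, by rw [hp3, hp22, hp21]⟩

lemma cycle (e : Exec N) (hfair : e.Fair) (m : ℕ) (h : (e.states m).cpc = CPC.c2) :
    ∃ k, m ≤ k ∧ (e.states k).cpc = CPC.c2 ∧ (e.states k).p = (e.states m).p + 1 := by
  obtain ⟨k1, hk1, h1, hp1⟩ := stage_c2 e hfair m h
  obtain ⟨k2, hk2, h2, hp2⟩ := stage_c3 e hfair k1 h1
  exact ⟨k2, by omega, h2, by rw [hp2, hp1]⟩

open Fin.NatCast in
lemma cycles (e : Exec N) (hfair : e.Fair) (d : ℕ) :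
    ∀ m, (e.states m).cpc = CPC.c2 →
    ∃ k, m ≤ k ∧ (e.states k).cpc = CPC.c2 ∧ (e.states k).p = (e.states m).p + (d : Fin N) := by
  induction d with
  | zero => intro m h; exact ⟨m, le_rfl, h, by simp⟩
  | succ d ih =>
      intro m h
      obtain ⟨k1, hk1, h1, hp1⟩ := cycle e hfair m h
      obtain ⟨k2, hk2, h2, hp2⟩ := ih k1 h1
      refine ⟨k2, by omega, h2, ?_⟩
      rw [hp2, hp1]
      push_cast
      abel

lemma reach_c2 (e : Exec N) (hfair : e.Fair) (m : ℕ) :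
    ∃ k, m ≤ k ∧ (e.states k).cpc = CPC.c2 := by
  cases h : (e.states m).cpc with
  | c1 =>
      obtain ⟨k, hk, hsk, hcpc, hp⟩ := coord_advance e hfair m
      have hst := e.step k; rw [hsk] at hst
      rcases coord_cases hst with ⟨hc, hq⟩ | ⟨hc, _, hq⟩ | ⟨hc, _, hq⟩ | ⟨hc, hq⟩ |
          ⟨hc, _, hq⟩ | ⟨hc, hq⟩ <;> rw [hcpc, h] at hc <;> try simp at hc
      exact ⟨k + 1, Nat.le_succ_of_le hk, by rw [hq]⟩
  | c2 => exact ⟨m, le_rfl, h⟩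
  | c21 =>
      obtain ⟨k1, hk1, h1, _, _⟩ := stage_c21 e hfair m h
      obtain ⟨k2, hk2, h2, _⟩ := stage_c22 e hfair k1 h1
      obtain ⟨k3, hk3, h3, _⟩ := stage_c3 e hfair k2 h2
      exact ⟨k3, by omega, h3⟩
  | c22 =>
      obtain ⟨k2, hk2, h2, _⟩ := stage_c22 e hfair m h
      obtain ⟨k3, hk3, h3, _⟩ := stage_c3 e hfair k2 h2
      exact ⟨k3, by omega, h3⟩
  | c3 =>
      obtain ⟨k3, hk3, h3, _⟩ := stage_c3 e hfair m h
      exact ⟨k3, by omega, h3⟩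

end Asym

open Asym in
/-- **Progress for the asymmetric algorithm.**
In every fair execution, every process that is waiting in state 2 (having
set `flag[i] := WAITING`) eventually enters the critical section. -/
theorem asym_progress {N : ℕ} [NeZero N] (e : Exec N) (hfair : e.Fair)
    (n : ℕ) (i : Fin N) (hi : (e.states n).pc i = PPC.s2) :
    ∃ m, n ≤ m ∧ (e.states m).pc i = PPC.cs := by
  by_contra hcon
  push_neg at hcon
  -- the process stays in state 2 forever
  have hstay : ∀ m, n ≤ m → (e.states m).pc i = PPC.s2 := by
    intro m hm
    induction m, hm using Nat.le_induction with
    | base => exact hi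
    | succ m hm ih =>
        have hst := e.step m
        cases hs : e.sched m with
        | none => rw [hs] at hst; rw [hst]; exact ih
        | some l =>
            rw [hs] at hst
            by_cases hl : l = Label.proc i
            · subst hl
              exact absurd (step_from_s2 hst ih) (hcon (m+1) (Nat.le_succ_of_le hm))
            · rw [(step_frame hst i hl).1]; exact ih
  -- hence its flag stays waiting
  have hflag : ∀ m, n ≤ m → (e.states m).flag i = Flag.waiting := fun m hm =>
    ((inv_all e m).1 i).mpr (Or.inl (hstay m hm))
  -- the turn is never given to i (else i would enter the CS)
  have hno : ∀ m, n ≤ m → (e.states m).turn ≠ some i := by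
    intro m hm hturn
    have hpers : ∀ k, m ≤ k → (e.states k).turn = some i := by
      intro k hk
      induction k, hk using Nat.le_induction with
      | base => exact hturn
      | succ k hk ih =>
          have hst := e.step k
          cases hs : e.sched k with
          | none => rw [hs] at hst; rw [hst]; exact ih
          | some l =>
              rw [hs] at hst
              by_cases hch : (e.states (k+1)).turn = (e.states k).turn
              · rw [hch]; exact ih
              · rcases turn_change hst hch with ⟨j, _, hj3, _⟩ | ⟨_, hc21, _⟩
                · have h2 := (inv_all e k).2.1 j (Or.inr hj3)
                  rw [ih] at h2
                  have hji : i = j := by injection h2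
                  rw [← hji] at hj3
                  rw [hstay k (le_trans hm hk)] at hj3
                  cases hj3
                · have := ((inv_all e k).2.2.1 i ih).1
                  rw [this] at hc21
                  cases hc21
    have hen : ∀ k, m ≤ k → Enabled (Label.proc i) (e.states k) := fun k hk =>
      ⟨_, Step.p2cs _ i (hstay k (le_trans hm hk)) (hpers k hk)⟩
    obtain ⟨k, hk, hsk⟩ := hfair (Label.proc i) m hen
    have hst := e.step k; rw [hsk] at hst
    exact absurd (step_from_s2 hst (hstay k (le_trans hm hk)))
      (hcon (k+1) (by omega))
  -- the coordinator reaches c2, then cycles until its counter is i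
  obtain ⟨m0, hm0, hc2⟩ := reach_c2 e hfair n
  obtain ⟨k, hk, hkc2, hkp⟩ := cycles e hfair ((i - (e.states m0).p).val) m0 hc2
  have hpi : (e.states k).p = i := by
    rw [hkp, Fin.cast_val_eq_self]
    abel
  -- at c2 with p = i and flag i = waiting, the coordinator moves to c21
  obtain ⟨k', hk', hsk', hcpc', hp'⟩ := coord_advance e hfair k
  have hst := e.step k'; rw [hsk'] at hst
  have hnk' : n ≤ k' := by omega
  rcases coord_cases hst with ⟨hc, hq⟩ | ⟨hc, hf, hq⟩ | ⟨hc, hf, hq⟩ | ⟨hc, hq⟩ |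
      ⟨hc, _, hq⟩ | ⟨hc, hq⟩ <;> rw [hcpc', hkc2] at hc <;> try simp at hc
  · -- c23 impossible: flag i is waiting
    rw [hp', hpi, hflag k' hnk'] at hf
    exact hf rfl
  · -- c2_21 : now at c21 with p = i, next coordinator step sets turn := some i
    have h21 : (e.states (k'+1)).cpc = CPC.c21 := by rw [hq]
    have hp21 : (e.states (k'+1)).p = i := by rw [hq]; rw [hp', hpi]
    obtain ⟨k2, hk2, _, _, ht2⟩ := stage_c21 e hfair (k'+1) h21
    rw [hp21] at ht2
    exact hno k2 (by omega) ht2
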